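/- arXiv:1705.10658 — 6 statements merged into one kernel-verified Lean document; each statement's English description precedes it below -/
import Mathlib

section
/- Let Q ∈ K⟦x⟧[y] be such that Q|x=0 ≠ 0, and let d', d ∈ ℤ_{≥0} with d' ≤ d. Suppose (f_i, t_i)_{1≤i≤ℓ} is a basic root set of Q to precision d'. For each i, set s_i = val_x(Q(f_i + x^{t_i} y)) and suppose Q_i = Q(f_i + x^{t_i} y)/x^{s_i} admits a basic root set (f_{i,j}, t_{i,j})_{1≤j≤ℓ_i} to precision d − s_i. Then (f_i + f_{i,j}·x^{t_i}, t_i + t_{i,j})_{1≤j≤ℓ_i, 1≤i≤ℓ} is a basic root set of Q to precision d. -/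
open Polynomial PowerSeries

/-- `Q|_{x=0}` : set `x = 0` in every coefficient. -/
noncomputable def atZero {K : Type*} [Field K] (Q : Polynomial (PowerSeries K)) : Polynomial K :=
  Q.map (PowerSeries.constantCoeff : PowerSeries K →+* K)

/-- `Q(f + x^t y)` : substitute `f + x^t·y` for `y`. -/
noncomputable def shift {K : Type*} [Field K] (Q : Polynomial (PowerSeries K))
    (f : PowerSeries K) (t : ℕ) : Polynomial (PowerSeries K) :=
  Q.comp (Polynomial.C f + Polynomial.C ((PowerSeries.X : PowerSeries K) ^ t) * Polynomial.X)

/-- `roots(Q, d)`: all of `K⟦x⟧` if `d ≤ 0`, else `{f | Q(f) ≡ 0 mod x^d}`. -/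
def seriesRoots {K : Type*} [Field K] (Q : Polynomial (PowerSeries K)) (d : ℤ) :
    Set (PowerSeries K) :=
  {f | 0 < d → (PowerSeries.X : PowerSeries K) ^ d.toNat ∣ Polynomial.eval f Q}

/-- `(F i)ᵢ` is a basic root set of `Q` to precision `d`. -/
def IsBasicRootSet {K : Type*} [Field K] (Q : Polynomial (PowerSeries K)) (d : ℤ)
    {ι : Type} [Fintype ι] (F : ι → Polynomial K × ℕ) : Prop :=
  if 0 < d then
    (∀ i, Polynomial.C ((PowerSeries.X : PowerSeries K) ^ d.toNat) ∣
        shift Q (((F i).1 : Polynomial K) : PowerSeries K) (F i).2) ∧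
    seriesRoots Q d =
      ⋃ i, {g | ∃ h : PowerSeries K,
        g = (((F i).1 : Polynomial K) : PowerSeries K) + (PowerSeries.X : PowerSeries K) ^ (F i).2 * h}
  else Set.range F = {(0, 0)}

/-- the root multiplicity of `(f, t)` in `Q` is `m`. -/
def HasRootMultiplicity {K : Type*} [Field K] (Q : Polynomial (PowerSeries K))
    (f : Polynomial K) (t : ℕ) (m : ℕ) : Prop :=
  ∃ (g : Polynomial K) (c : K) (s : ℕ) (R : Polynomial (PowerSeries K)),
    f = g + Polynomial.C c * Polynomial.X ^ (t - 1) ∧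
    g.degree < ((t - 1 : ℕ) : WithBot ℕ) ∧
    shift Q ((g : Polynomial K) : PowerSeries K) (t - 1)
      = Polynomial.C ((PowerSeries.X : PowerSeries K) ^ s) * R ∧
    atZero R ≠ 0 ∧
    m = (atZero R).rootMultiplicity c

/-- `(F i)ᵢ` is a reduced root set of `Q` to precision `d`. -/
def IsReducedRootSet {K : Type*} [Field K] (Q : Polynomial (PowerSeries K)) (d : ℤ)
    {ι : Type} [Fintype ι] (F : ι → Polynomial K × ℕ) : Prop :=
  IsBasicRootSet Q d F ∧
  (0 < d → ∃ m : ι → ℕ,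
    (∀ i, (F i).1 ≠ 0) ∧
    (∀ i, HasRootMultiplicity Q (F i).1 (F i).2 (m i)) ∧
    (∀ i, 1 ≤ m i) ∧
    (∀ i (s : ℕ) (Qi : Polynomial (PowerSeries K)),
      shift Q (((F i).1 : Polynomial K) : PowerSeries K) (F i).2
        = Polynomial.C ((PowerSeries.X : PowerSeries K) ^ s) * Qi →
      atZero Qi ≠ 0 → (atZero Qi).natDegree ≤ m i) ∧
    (∑ i, m i) ≤ (atZero Q).natDegree)
lemma shift_shift' {K : Type*} [Field K] (Q : Polynomial (PowerSeries K)) (f g : PowerSeries K) (t u : ℕ) :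
    shift (shift Q f t) g u = shift Q (f + (PowerSeries.X : PowerSeries K) ^ t * g) (t + u) := by
  unfold shift
  rw [Polynomial.comp_assoc]
  congr 1
  simp only [add_comp, mul_comp, C_comp, X_comp, map_add, map_mul, pow_add]
  ring

lemma shift_C_mul' {K : Type*} [Field K] (a : PowerSeries K) (R : Polynomial (PowerSeries K))
    (f : PowerSeries K) (t : ℕ) : shift (Polynomial.C a * R) f t = Polynomial.C a * shift R f t := by
  simp [shift, mul_comp]

lemma eval_shift' {K : Type*} [Field K] (Q : Polynomial (PowerSeries K)) (f : PowerSeries K)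
    (t : ℕ) (h : PowerSeries K) :
    (shift Q f t).eval h = Q.eval (f + (PowerSeries.X : PowerSeries K) ^ t * h) := by
  simp [shift, eval_comp]

/-- composition of basic root sets. -/
theorem basic_root_set_composition {K : Type*} [Field K]
    (Q : Polynomial (PowerSeries K)) (h0 : atZero Q ≠ 0)
    (d' d : ℤ) (hd' : 0 ≤ d') (hdd : d' ≤ d)
    (ℓ : ℕ) (F : Fin ℓ → Polynomial K × ℕ)
    (hF : IsBasicRootSet Q d' F)
    (s : Fin ℓ → ℕ) (Qs : Fin ℓ → Polynomial (PowerSeries K))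
    (hshift : ∀ i, shift Q (((F i).1 : Polynomial K) : PowerSeries K) (F i).2
      = Polynomial.C ((PowerSeries.X : PowerSeries K) ^ s i) * Qs i)
    (hval : ∀ i, atZero (Qs i) ≠ 0)
    (ℓ' : Fin ℓ → ℕ) (G : ∀ i, Fin (ℓ' i) → Polynomial K × ℕ)
    (hG : ∀ i, IsBasicRootSet (Qs i) (d - (s i : ℤ)) (G i)) :
    IsBasicRootSet Q d
      (fun p : Σ i : Fin ℓ, Fin (ℓ' i) =>
        ((F p.1).1 + (G p.1 p.2).1 * Polynomial.X ^ (F p.1).2,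
         (F p.1).2 + (G p.1 p.2).2)) := by
  have hd0 : 0 ≤ d := hd'.trans hdd
  have hcov : ∀ f : PowerSeries K, f ∈ seriesRoots Q d' →
      ∃ i h, f = (((F i).1 : Polynomial K) : PowerSeries K)
        + (PowerSeries.X : PowerSeries K) ^ (F i).2 * h := by
    intro f hf
    by_cases hd'' : 0 < d'
    · simp only [IsBasicRootSet, if_pos hd''] at hF
      rw [hF.2] at hf
      simp only [Set.mem_iUnion, Set.mem_setOf_eq] at hf
      obtain ⟨i, h, hh⟩ := hf
      exact ⟨i, h, hh⟩
    · simp only [IsBasicRootSet, if_neg hd''] at hF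
      have : (⟨0, 0⟩ : Polynomial K × ℕ) ∈ Set.range F := by rw [hF]; rfl
      obtain ⟨i, hi⟩ := this
      refine ⟨i, f, ?_⟩
      rw [hi]
      simp
  rcases eq_or_lt_of_le hd0 with hd | hd
  · -- d = 0
    simp only [IsBasicRootSet, if_neg (show ¬ 0 < d by omega)]
    simp only [IsBasicRootSet, if_neg (show ¬ 0 < d' by omega)] at hF
    have hGz : ∀ i, Set.range (G i) = {(0, 0)} := by
      intro i
      have h2 := hG i
      simp only [IsBasicRootSet, if_neg (show ¬ 0 < d - (s i : ℤ) by omega)] at h2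
      exact h2
    ext p
    simp only [Set.mem_range, Set.mem_singleton_iff]
    constructor
    · rintro ⟨⟨i, j⟩, rfl⟩
      have hFi : F i = (0, 0) := by
        have h3 : F i ∈ Set.range F := ⟨i, rfl⟩
        rw [hF] at h3; exact h3
      have hGij : G i j = (0, 0) := by
        have h3 : G i j ∈ Set.range (G i) := ⟨j, rfl⟩
        rw [hGz i] at h3; exact h3
      simp [hFi, hGij]
    · rintro rfl
      have h3 : (⟨0, 0⟩ : Polynomial K × ℕ) ∈ Set.range F := by rw [hF]; rfl
      obtain ⟨i, hi⟩ := h3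
      have h4 : (⟨0, 0⟩ : Polynomial K × ℕ) ∈ Set.range (G i) := by rw [hGz i]; rfl
      obtain ⟨j, hj⟩ := h4
      exact ⟨⟨i, j⟩, by simp [hi, hj]⟩
  · -- d > 0
    simp only [IsBasicRootSet, if_pos hd]
    have key : ∀ (i : Fin ℓ) (j : Fin (ℓ' i)),
        shift Q (((F i).1 + (G i j).1 * Polynomial.X ^ (F i).2 : Polynomial K) : PowerSeries K)
            ((F i).2 + (G i j).2)
          = Polynomial.C ((PowerSeries.X : PowerSeries K) ^ s i)
            * shift (Qs i) (((G i j).1 : Polynomial K) : PowerSeries K) (G i j).2 := by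
      intro i j
      have hc : (((F i).1 + (G i j).1 * Polynomial.X ^ (F i).2 : Polynomial K) : PowerSeries K)
          = (((F i).1 : Polynomial K) : PowerSeries K)
            + (PowerSeries.X : PowerSeries K) ^ (F i).2 * (((G i j).1 : Polynomial K) : PowerSeries K) := by
        push_cast
        ring
      rw [hc, ← shift_shift', hshift i, shift_C_mul']
    constructor
    · rintro ⟨i, j⟩
      simp only
      rw [key i j]
      by_cases hds : 0 < d - (s i : ℤ)
      · have hGi := hG i
        simp only [IsBasicRootSet, if_pos hds] at hGi
        have hdvd := hGi.1 j
        have hdn : d.toNat = s i + (d - (s i : ℤ)).toNat := by omega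
        rw [hdn, pow_add, map_mul]
        exact mul_dvd_mul_left _ hdvd
      · have hGi := hG i
        simp only [IsBasicRootSet, if_neg hds] at hGi
        obtain ⟨k, hk⟩ := Nat.exists_eq_add_of_le (show d.toNat ≤ s i by omega)
        rw [hk, pow_add, map_mul]
        exact dvd_mul_of_dvd_left (dvd_mul_right _ _) _
    · ext f
      simp only [seriesRoots, Set.mem_setOf_eq, Set.mem_iUnion]
      constructor
      · intro hf
        obtain ⟨i, h, rfl⟩ := hcov f (fun hd'' =>
          dvd_trans (pow_dvd_pow _ (show d'.toNat ≤ d.toNat by omega)) (hf hd))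
        have heval : Polynomial.eval
            ((((F i).1 : Polynomial K) : PowerSeries K) + (PowerSeries.X : PowerSeries K) ^ (F i).2 * h) Q
            = (PowerSeries.X : PowerSeries K) ^ s i * Polynomial.eval h (Qs i) := by
          rw [← eval_shift', hshift i, Polynomial.eval_mul, Polynomial.eval_C]
        by_cases hds : 0 < d - (s i : ℤ)
        · have hh : h ∈ seriesRoots (Qs i) (d - (s i : ℤ)) := by
            intro _
            have hdvd := hf hd
            rw [heval] at hdvd
            have hdn : d.toNat = s i + (d - (s i : ℤ)).toNat := by omega
            rw [hdn, pow_add] at hdvd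
            exact (mul_dvd_mul_iff_left (pow_ne_zero _ PowerSeries.X_ne_zero)).mp hdvd
          have hGi := hG i
          simp only [IsBasicRootSet, if_pos hds] at hGi
          rw [hGi.2] at hh
          simp only [Set.mem_iUnion, Set.mem_setOf_eq] at hh
          obtain ⟨j, h', hh'⟩ := hh
          refine ⟨⟨i, j⟩, h', ?_⟩
          simp only
          rw [hh']
          push_cast
          ring
        · have hGi := hG i
          simp only [IsBasicRootSet, if_neg hds] at hGi
          have h4 : (⟨0, 0⟩ : Polynomial K × ℕ) ∈ Set.range (G i) := by rw [hGi]; rfl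
          obtain ⟨j, hj⟩ := h4
          refine ⟨⟨i, j⟩, h, ?_⟩
          simp only [hj]
          push_cast
          ring
      · rintro ⟨⟨i, j⟩, h, rfl⟩ _
        rw [← eval_shift', key i j, Polynomial.eval_mul, Polynomial.eval_C]
        by_cases hds : 0 < d - (s i : ℤ)
        · have hGi := hG i
          simp only [IsBasicRootSet, if_pos hds] at hGi
          obtain ⟨S, hS⟩ := hGi.1 j
          rw [hS, Polynomial.eval_mul, Polynomial.eval_C]
          have hdn : d.toNat = s i + (d - (s i : ℤ)).toNat := by omega
          rw [hdn, pow_add]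
          exact mul_dvd_mul_left _ (dvd_mul_right _ _)
        · exact dvd_mul_of_dvd_left (pow_dvd_pow _ (show d.toNat ≤ s i by omega)) _
end

section
/- Let Q ∈ K⟦x⟧[y] be such that Q|x=0 ≠ 0. Then there exist unique A, B ∈ K⟦x⟧[y] such that Q = A·B, A is monic, and B|x=0 is a nonzero constant of K. -/
open Polynomial PowerSeries

namespace WPrep
variable {K : Type*} [Field K]

/-- the polynomial of `k`-th `x`-coefficients. -/
noncomputable def coeffP (k : ℕ) (Q : Polynomial (PowerSeries K)) : Polynomial K :=
  ⟨AddMonoidAlgebra.ofCoeff (Q.toFinsupp.coeff.mapRange (PowerSeries.coeff k) (map_zero _))⟩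

lemma coeffP_coeff (k j : ℕ) (Q : Polynomial (PowerSeries K)) :
    (coeffP k Q).coeff j = PowerSeries.coeff k (Q.coeff j) := by
  simp [coeffP, Polynomial.coeff, Finsupp.mapRange_apply]

lemma ext_coeffP {P Q : Polynomial (PowerSeries K)} (h : ∀ k, coeffP k P = coeffP k Q) :
    P = Q := by
  ext j k
  have : (coeffP k P).coeff j = (coeffP k Q).coeff j := by rw [h k]
  simpa [coeffP_coeff] using this

lemma coeffP_mul (k : ℕ) (P Q : Polynomial (PowerSeries K)) :
    coeffP k (P * Q) = ∑ kk ∈ Finset.HasAntidiagonal.antidiagonal k, coeffP kk.1 P * coeffP kk.2 Q := by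
  ext j
  rw [coeffP_coeff, Polynomial.coeff_mul, Polynomial.finset_sum_coeff]
  simp only [Polynomial.coeff_mul, PowerSeries.coeff_mul, coeffP_coeff, map_sum,
    Finset.sum_mul, Finset.mul_sum]
  exact Finset.sum_comm

lemma natDegree_coeffP_le (k : ℕ) (Q : Polynomial (PowerSeries K)) :
    (coeffP k Q).natDegree ≤ Q.natDegree := by
  refine Polynomial.natDegree_le_iff_coeff_eq_zero.2 fun j hj => ?_
  rw [coeffP_coeff, Polynomial.coeff_eq_zero_of_natDegree_lt hj, map_zero]

lemma atZero_eq_coeffP (Q : Polynomial (PowerSeries K)) : atZero Q = coeffP 0 Q := by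
  ext j
  rw [coeffP_coeff, atZero, Polynomial.coeff_map, PowerSeries.coeff_zero_eq_constantCoeff]

end WPrep

namespace WPrep
variable {K : Type*} [Field K]

noncomputable def recAB (A₀ : Polynomial K) (c : K) (q : ℕ → Polynomial K) :
    ℕ → Polynomial K × Polynomial K
  | 0 => (A₀, Polynomial.C c)
  | (k+1) =>
    let S := q (k+1) - ∑ i ∈ (Finset.range k).attach,
      (recAB A₀ c q (i.1+1)).1 * (recAB A₀ c q (k-i.1)).2
    (c⁻¹ • (S %ₘ A₀), S /ₘ A₀)
  termination_by k => k
  decreasing_by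
    · have := i.2; simp only [Finset.mem_range] at this; omega
    · have := i.2; simp only [Finset.mem_range] at this; omega

noncomputable def Sf (A₀ : Polynomial K) (c : K) (q : ℕ → Polynomial K) (k : ℕ) :
    Polynomial K :=
  q (k+1) - ∑ i ∈ Finset.range k, (recAB A₀ c q (i+1)).1 * (recAB A₀ c q (k-i)).2

lemma recAB_succ (A₀ : Polynomial K) (c : K) (q : ℕ → Polynomial K) (k : ℕ) :
    recAB A₀ c q (k+1) = (c⁻¹ • (Sf A₀ c q k %ₘ A₀), Sf A₀ c q k /ₘ A₀) := by
  rw [recAB, Sf, ← Finset.sum_attach (Finset.range k)]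

end WPrep

namespace WPrep
variable {K : Type*} [Field K] {A₀ : Polynomial K} {c : K} {q : ℕ → Polynomial K}

lemma smul_mul_C_cancel {c : K} (hc : c ≠ 0) (p : Polynomial K) :
    (c⁻¹ • p) * Polynomial.C c = p := by
  rw [Polynomial.smul_eq_C_mul, mul_comm, ← mul_assoc, mul_comm (Polynomial.C c),
    ← Polynomial.C_mul, inv_mul_cancel₀ hc, Polynomial.C_1, one_mul]

lemma sum_eq (hA : A₀.Monic) (hc : c ≠ 0) (hq0 : q 0 = A₀ * Polynomial.C c) (k : ℕ) :
    q k = ∑ kk ∈ Finset.HasAntidiagonal.antidiagonal k,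
      (recAB A₀ c q kk.1).1 * (recAB A₀ c q kk.2).2 := by
  cases k with
  | zero => simpa [recAB] using hq0
  | succ k =>
    rw [Finset.Nat.sum_antidiagonal_eq_sum_range_succ_mk, Finset.sum_range_succ',
      Finset.sum_range_succ]
    have hmid : ∀ i ∈ Finset.range k,
        (recAB A₀ c q (i+1)).1 * (recAB A₀ c q (k+1-(i+1))).2
          = (recAB A₀ c q (i+1)).1 * (recAB A₀ c q (k-i)).2 := by
      intro i hi
      rw [Nat.succ_sub_succ]
    rw [Finset.sum_congr rfl hmid]
    have h0 : (recAB A₀ c q 0).1 = A₀ := by simp [recAB]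
    have h0' : (recAB A₀ c q 0).2 = Polynomial.C c := by simp [recAB]
    have h1 : (recAB A₀ c q (k+1)).1 = c⁻¹ • (Sf A₀ c q k %ₘ A₀) := by rw [recAB_succ]
    have h2 : (recAB A₀ c q (k+1)).2 = Sf A₀ c q k /ₘ A₀ := by rw [recAB_succ]
    simp only [Nat.sub_zero, Nat.sub_self, Nat.add_sub_cancel]
    rw [h0, h0', h1, h2, smul_mul_C_cancel hc]
    have := Polynomial.modByMonic_add_div (Sf A₀ c q k) A₀
    rw [Sf] at this ⊢
    linear_combination -this

end WPrep

namespace WPrep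
variable {K : Type*} [Field K] {A₀ : Polynomial K} {c : K} {q : ℕ → Polynomial K}

lemma recAB_fst_degree_lt (hA : A₀.Monic) (k : ℕ) :
    ((recAB A₀ c q (k+1)).1).degree < A₀.degree := by
  rw [recAB_succ]
  exact lt_of_le_of_lt (Polynomial.degree_smul_le _ _)
    (Polynomial.degree_modByMonic_lt _ hA)

lemma recAB_fst_natDegree_le (hA : A₀.Monic) (k : ℕ) :
    ((recAB A₀ c q k).1).natDegree ≤ A₀.natDegree := by
  cases k with
  | zero => simp [recAB]
  | succ k =>
    exact Polynomial.natDegree_le_natDegree (le_of_lt (recAB_fst_degree_lt hA k))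

lemma recAB_snd_natDegree_le (hA : A₀.Monic) {N : ℕ} (hq : ∀ k, (q k).natDegree ≤ N)
    (hn : A₀.natDegree ≤ N) (k : ℕ) :
    ((recAB A₀ c q k).2).natDegree ≤ N - A₀.natDegree := by
  induction k using Nat.strong_induction_on with
  | _ k ih =>
    match k with
    | 0 => simp [recAB]
    | (k+1) =>
      rw [recAB_succ]
      rw [Polynomial.natDegree_divByMonic _ hA]
      refine Nat.sub_le_sub_right ?_ _
      refine le_trans (Polynomial.natDegree_sub_le _ _) (max_le (hq _) ?_)
      refine Polynomial.natDegree_sum_le_of_forall_le _ _ fun i hi => ?_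
      refine le_trans (Polynomial.natDegree_mul_le) ?_
      have h1 := recAB_fst_natDegree_le (c := c) (q := q) hA (i+1)
      have h2 := ih (k - i) (by omega)
      omega

/-- assemble a polynomial over power series from a bounded family of polynomials -/
noncomputable def mkP (a : ℕ → Polynomial K) (N : ℕ) : Polynomial (PowerSeries K) :=
  ∑ j ∈ Finset.range (N+1), Polynomial.monomial j (PowerSeries.mk fun k => (a k).coeff j)

lemma mkP_coeff (a : ℕ → Polynomial K) (N j : ℕ) :
    (mkP a N).coeff j
      = if j ≤ N then PowerSeries.mk (fun k => (a k).coeff j) else 0 := by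
  rw [mkP, Polynomial.finset_sum_coeff]
  simp only [Polynomial.coeff_monomial]
  rw [Finset.sum_ite_eq' (Finset.range (N+1)) j]
  simp [Nat.lt_succ_iff]

lemma coeffP_mkP (a : ℕ → Polynomial K) (N : ℕ) (h : ∀ k, (a k).natDegree ≤ N) (k : ℕ) :
    coeffP k (mkP a N) = a k := by
  ext j
  rw [coeffP_coeff, mkP_coeff]
  split
  · simp
  · next hj =>
    rw [map_zero, eq_comm]
    exact Polynomial.coeff_eq_zero_of_natDegree_lt (lt_of_le_of_lt (h k) (by omega))

lemma mkP_natDegree_le (a : ℕ → Polynomial K) (N : ℕ) : (mkP a N).natDegree ≤ N := by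
  refine Polynomial.natDegree_sum_le_of_forall_le _ _ fun j hj => ?_
  exact le_trans (Polynomial.natDegree_monomial_le _) (by simpa [Nat.lt_succ_iff] using hj)

end WPrep


open WPrep

/-- Weierstrass-type factorization: if `Q|x=0 ≠ 0` then there are unique
`A, B ∈ K⟦x⟧[y]` with `Q = A·B`, `A` monic, and `B|x=0` a nonzero constant of `K`. -/
theorem affine_factor_exists_unique {K : Type*} [Field K]
    (Q : Polynomial (PowerSeries K)) (h0 : atZero Q ≠ 0) :
    ∃! AB : Polynomial (PowerSeries K) × Polynomial (PowerSeries K),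
      Q = AB.1 * AB.2 ∧ AB.1.Monic ∧
        ∃ c : K, c ≠ 0 ∧ atZero AB.2 = Polynomial.C c := by
  classical
  set Q₀ : Polynomial K := atZero Q with hQ0def
  set c : K := Q₀.leadingCoeff with hcdef
  have hc : c ≠ 0 := Polynomial.leadingCoeff_ne_zero.2 h0
  set A₀ : Polynomial K := Q₀ * Polynomial.C c⁻¹ with hA0def
  have hA : A₀.Monic := Polynomial.monic_mul_leadingCoeff_inv h0
  have hA0n : A₀.natDegree = Q₀.natDegree := Polynomial.natDegree_mul_C (inv_ne_zero hc)
  set q : ℕ → Polynomial K := fun k => coeffP k Q with hqdef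
  have hq0 : q 0 = A₀ * Polynomial.C c := by
    rw [hqdef]
    dsimp only
    rw [← atZero_eq_coeffP, hA0def, mul_assoc, ← Polynomial.C_mul, inv_mul_cancel₀ hc,
      Polynomial.C_1, mul_one, hQ0def]
  set N : ℕ := Q.natDegree with hNdef
  have hqN : ∀ k, (q k).natDegree ≤ N := fun k => natDegree_coeffP_le k Q
  have hnN : A₀.natDegree ≤ N := by
    rw [hA0n, hQ0def, atZero_eq_coeffP]
    exact natDegree_coeffP_le 0 Q
  set n : ℕ := A₀.natDegree with hndef
  set a : ℕ → Polynomial K := fun k => (recAB A₀ c q k).1 with hadef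
  set b : ℕ → Polynomial K := fun k => (recAB A₀ c q k).2 with hbdef
  have ha0 : a 0 = A₀ := by rw [hadef]; simp [recAB]
  have hb0 : b 0 = Polynomial.C c := by rw [hbdef]; simp [recAB]
  have ha : ∀ k, (a k).natDegree ≤ n := fun k => recAB_fst_natDegree_le hA k
  have hb : ∀ k, (b k).natDegree ≤ N - n := fun k => recAB_snd_natDegree_le hA hqN hnN k
  set A : Polynomial (PowerSeries K) := mkP a n with hAdef
  set B : Polynomial (PowerSeries K) := mkP b (N - n) with hBdef
  have hcA : ∀ k, coeffP k A = a k := coeffP_mkP a n ha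
  have hcB : ∀ k, coeffP k B = b k := coeffP_mkP b (N - n) hb
  have hfac : Q = A * B := by
    refine ext_coeffP fun k => ?_
    rw [coeffP_mul]
    simp only [hcA, hcB]
    exact sum_eq hA hc hq0 k
  have hAmonic : A.Monic := by
    refine Polynomial.monic_of_natDegree_le_of_coeff_eq_one n (mkP_natDegree_le a n) ?_
    rw [hAdef, mkP_coeff, if_pos le_rfl]
    refine PowerSeries.ext fun k => ?_
    rw [PowerSeries.coeff_mk]
    cases k with
    | zero =>
      rw [ha0, hndef]
      simp [hA.coeff_natDegree]
    | succ k =>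
      have hlt : (a (k+1)).degree < A₀.degree := recAB_fst_degree_lt hA k
      rw [Polynomial.degree_eq_natDegree hA.ne_zero] at hlt
      rw [Polynomial.coeff_eq_zero_of_degree_lt hlt]
      simp [PowerSeries.coeff_one]
  have hBat : atZero B = Polynomial.C c := by
    rw [atZero_eq_coeffP, hcB 0, hb0]
  refine ⟨(A, B), ⟨hfac, hAmonic, c, hc, hBat⟩, ?_⟩
  rintro ⟨A', B'⟩ ⟨hfac', hmon', c', hc', hbz'⟩
  have hsplit : Q₀ = atZero A' * Polynomial.C c' := by
    rw [hQ0def, hfac']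
    show (A' * B').map _ = _
    rw [Polynomial.map_mul]
    rw [show B'.map (PowerSeries.constantCoeff : PowerSeries K →+* K) = atZero B' from rfl, hbz']
    rfl
  have hmonA'0 : (atZero A').Monic := hmon'.map _
  have hcc : c' = c := by
    have h := congrArg Polynomial.leadingCoeff hsplit
    rw [Polynomial.leadingCoeff_mul, Polynomial.leadingCoeff_C, hmonA'0.leadingCoeff,
      one_mul] at h
    rw [hcdef, h]
  have hA'0 : atZero A' = A₀ := by
    rw [hA0def, hsplit, hcc, mul_assoc, ← Polynomial.C_mul, mul_inv_cancel₀ hc,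
      Polynomial.C_1, mul_one]
  have hndA' : A'.natDegree = n := by
    have h := hmon'.natDegree_map (PowerSeries.constantCoeff : PowerSeries K →+* K)
    rw [show A'.map (PowerSeries.constantCoeff : PowerSeries K →+* K) = atZero A' from rfl, hA'0] at h
    rw [← h, hndef]
  have hdeglt : ∀ k, (coeffP (k+1) A').degree < A₀.degree := by
    intro k
    rw [Polynomial.degree_eq_natDegree hA.ne_zero]
    refine (Polynomial.degree_lt_iff_coeff_zero _ n).2 fun m hm => ?_
    rw [coeffP_coeff]
    rcases eq_or_lt_of_le hm with heq | hlt
    · have h1 : A'.coeff m = 1 := by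
        rw [← heq, ← hndA']
        exact hmon'.coeff_natDegree
      rw [h1]
      simp [PowerSeries.coeff_one]
    · rw [Polynomial.coeff_eq_zero_of_natDegree_lt (by omega : A'.natDegree < m), map_zero]
  have key : ∀ k, coeffP k A' = a k ∧ coeffP k B' = b k := by
    intro k
    induction k using Nat.strong_induction_on with
    | _ k ih =>
      match k with
      | 0 =>
        constructor
        · rw [← atZero_eq_coeffP, hA'0, ha0]
        · rw [← atZero_eq_coeffP, hbz', hcc, hb0]
      | (k+1) =>
        have e0 : coeffP 0 B' = Polynomial.C c := by rw [← atZero_eq_coeffP, hbz', hcc]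
        have e0' : coeffP 0 A' = A₀ := by rw [← atZero_eq_coeffP, hA'0]
        have hsum : q (k+1) = (∑ i ∈ Finset.range k, a (i+1) * b (k-i)
            + coeffP (k+1) A' * Polynomial.C c) + A₀ * coeffP (k+1) B' := by
          have h1 : q (k+1) = ∑ kk ∈ Finset.HasAntidiagonal.antidiagonal (k+1),
              coeffP kk.1 A' * coeffP kk.2 B' := by
            rw [hqdef]
            dsimp only
            rw [hfac', coeffP_mul]
          rw [h1, Finset.Nat.sum_antidiagonal_eq_sum_range_succ_mk, Finset.sum_range_succ',
            Finset.sum_range_succ, Nat.sub_zero, Nat.sub_self, e0, e0']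
          congr 2
          refine Finset.sum_congr rfl fun i hi => ?_
          simp only [Finset.mem_range] at hi
          rw [Nat.succ_sub_succ, (ih (i+1) (by omega)).1, (ih (k-i) (by omega)).2]
        have hS : Sf A₀ c q k = coeffP (k+1) A' * Polynomial.C c + A₀ * coeffP (k+1) B' := by
          rw [Sf, hsum]
          ring
        have hdiv := Polynomial.div_modByMonic_unique (f := Sf A₀ c q k)
          (coeffP (k+1) B') (coeffP (k+1) A' * Polynomial.C c) hA
          ⟨hS.symm, by rw [Polynomial.degree_mul_C hc]; exact hdeglt k⟩
        constructor
        · have hm : Sf A₀ c q k %ₘ A₀ = coeffP (k+1) A' * Polynomial.C c := hdiv.2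
          have ha1 : a (k+1) = c⁻¹ • (Sf A₀ c q k %ₘ A₀) := by
            rw [hadef]
            dsimp only
            rw [recAB_succ]
          rw [ha1, hm, Polynomial.smul_eq_C_mul, mul_comm (Polynomial.C c⁻¹), mul_assoc,
            ← Polynomial.C_mul, mul_inv_cancel₀ hc, Polynomial.C_1, mul_one]
        · have hb1 : b (k+1) = Sf A₀ c q k /ₘ A₀ := by
            rw [hbdef]
            dsimp only
            rw [recAB_succ]
          rw [hb1, hdiv.1]
  have hA'A : A' = A := ext_coeffP fun k => ((key k).1).trans (hcA k).symm
  have hB'B : B' = B := ext_coeffP fun k => ((key k).2).trans (hcB k).symm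
  exact Prod.ext hA'A hB'B
end

section
/- Let d ∈ ℤ_{>0} and let Q, Q' ∈ K⟦x⟧[y] be such that Q|x=0 ≠ 0 and Q ≡ Q' mod x^d (coefficientwise). Then the affine factor of Q and the affine factor of Q' are congruent modulo x^d. -/
open Polynomial PowerSeries

private lemma CX_dvd_of_atZero {K : Type*} [Field K] (S : Polynomial (PowerSeries K))
    (h : atZero S = 0) : Polynomial.C (PowerSeries.X : PowerSeries K) ∣ S := by
  rw [Polynomial.C_dvd_iff_dvd_coeff]
  intro i
  rw [PowerSeries.X_dvd_iff]
  have := congrArg (fun p => Polynomial.coeff p i) h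
  simp only [atZero, Polynomial.coeff_map, Polynomial.coeff_zero] at this
  exact this

/-- if `Q ≡ Q' mod x^d` then the affine factors of `Q` and `Q'` are
congruent modulo `x^d`. -/
theorem affine_factor_congruent {K : Type*} [Field K]
    (d : ℕ) (hd : 0 < d)
    (Q Q' A B A' B' : Polynomial (PowerSeries K))
    (h0 : atZero Q ≠ 0) (h0' : atZero Q' ≠ 0)
    (hcong : Polynomial.C ((PowerSeries.X : PowerSeries K) ^ d) ∣ (Q - Q'))
    (hQ : Q = A * B) (hA : A.Monic)
    (hB : ∃ c : K, c ≠ 0 ∧ atZero B = Polynomial.C c)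
    (hQ' : Q' = A' * B') (hA' : A'.Monic)
    (hB' : ∃ c : K, c ≠ 0 ∧ atZero B' = Polynomial.C c) :
    Polynomial.C ((PowerSeries.X : PowerSeries K) ^ d) ∣ (A - A') := by
  obtain ⟨c, hc, hBc⟩ := hB
  obtain ⟨c', hc', hBc'⟩ := hB'
  have hXne : (PowerSeries.X : PowerSeries K) ≠ 0 := PowerSeries.X_ne_zero
  have hAm : (atZero A).Monic := hA.map _
  have hA'm : (atZero A').Monic := hA'.map _
  -- atZero Q = atZero Q'
  have hQQ' : atZero Q = atZero Q' := by
    obtain ⟨W, hW⟩ := hcong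
    have h1 : atZero (Q - Q') = 0 := by
      rw [hW]
      simp [atZero, Polynomial.map_mul, Polynomial.map_C, map_pow,
        PowerSeries.constantCoeff_X, zero_pow hd.ne']
    have : atZero Q - atZero Q' = 0 := by
      rw [atZero, atZero, ← Polynomial.map_sub]; exact h1
    exact sub_eq_zero.1 this
  have eQ : atZero Q = atZero A * Polynomial.C c := by
    rw [hQ, atZero, Polynomial.map_mul, ← atZero, ← atZero, hBc]
  have eQ' : atZero Q' = atZero A' * Polynomial.C c' := by
    rw [hQ', atZero, Polynomial.map_mul, ← atZero, ← atZero, hBc']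
  have hdegA : (atZero A).degree = A.degree := hA.degree_map _
  have hdegA' : (atZero A').degree = A'.degree := hA'.degree_map _
  have hdegAA' : A.degree = A'.degree := by
    have := congrArg Polynomial.degree (eQ.symm.trans (hQQ'.trans eQ'))
    rw [Polynomial.degree_mul, Polynomial.degree_mul, Polynomial.degree_C hc,
      Polynomial.degree_C hc', add_zero, add_zero, hdegA, hdegA'] at this
    exact this
  have hsubdeg : (A - A').degree < A.degree := by
    apply Polynomial.degree_sub_lt hdegAA' hA.ne_zero
    rw [hA.leadingCoeff, hA'.leadingCoeff]
  suffices key : ∀ k, k ≤ d →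
      (Polynomial.C ((PowerSeries.X : PowerSeries K) ^ k) ∣ (A - A') ∧
       Polynomial.C ((PowerSeries.X : PowerSeries K) ^ k) ∣ (B - B')) by
    exact (key d le_rfl).1
  intro k
  induction k with
  | zero => intro _; simp
  | succ k ih =>
    intro hk1
    obtain ⟨⟨S, hS⟩, ⟨T, hT⟩⟩ := ih (Nat.le_of_succ_le hk1)
    have hCk : (Polynomial.C ((PowerSeries.X : PowerSeries K) ^ k) :
        Polynomial (PowerSeries K)) ≠ 0 := by
      simpa [Polynomial.C_eq_zero] using pow_ne_zero k hXne
    have hfact : Q - Q' =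
        Polynomial.C ((PowerSeries.X : PowerSeries K) ^ k) * (S * B' + A * T) := by
      have h1 : A * B - A' * B' = (A - A') * B' + A * (B - B') := by ring
      rw [hQ, hQ', h1, hS, hT]; ring
    obtain ⟨W, hW⟩ : Polynomial.C ((PowerSeries.X : PowerSeries K) ^ (k + 1)) ∣ (Q - Q') := by
      refine dvd_trans ?_ hcong
      exact map_dvd Polynomial.C (pow_dvd_pow _ hk1)
    have hcanc : S * B' + A * T = Polynomial.C (PowerSeries.X : PowerSeries K) * W := by
      apply mul_left_cancel₀ hCk
      rw [← hfact, hW, pow_succ, map_mul]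
      ring
    have hzero : atZero S * Polynomial.C c' + atZero A * atZero T = 0 := by
      have h2 := congrArg atZero hcanc
      simp only [atZero, Polynomial.map_add, Polynomial.map_mul, Polynomial.map_C,
        PowerSeries.constantCoeff_X, Polynomial.C_0, zero_mul] at h2
      have hBc'' : Polynomial.map (PowerSeries.constantCoeff : PowerSeries K →+* K) B' = Polynomial.C c' := hBc'
      rw [hBc''] at h2
      exact h2
    have hdS : (atZero S).degree < (atZero A).degree := by
      have h3 : S.degree = (A - A').degree := by
        rw [hS, Polynomial.degree_mul, Polynomial.degree_C (pow_ne_zero k hXne), zero_add]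
      calc (atZero S).degree ≤ S.degree := Polynomial.degree_map_le
        _ = (A - A').degree := h3
        _ < A.degree := hsubdeg
        _ = (atZero A).degree := hdegA.symm
    have hT0 : atZero T = 0 := by
      by_contra hne
      have h4 : atZero A * atZero T = -(atZero S * Polynomial.C c') := by
        linear_combination hzero
      have h5 : (atZero A).degree ≤ (atZero A * atZero T).degree := by
        rw [Polynomial.degree_mul]
        exact le_add_of_nonneg_right (Polynomial.zero_le_degree_iff.2 hne)
      rw [h4, Polynomial.degree_neg, Polynomial.degree_mul, Polynomial.degree_C hc',
        add_zero] at h5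
      exact absurd (lt_of_lt_of_le hdS h5) (lt_irrefl _)
    have hS0 : atZero S = 0 := by
      have h6 : atZero S * Polynomial.C c' = 0 := by
        rw [hT0, mul_zero, add_zero] at hzero; exact hzero
      rcases mul_eq_zero.1 h6 with h | h
      · exact h
      · exact absurd h (by simpa [Polynomial.C_eq_zero] using hc')
    obtain ⟨S₂, hS₂⟩ := CX_dvd_of_atZero S hS0
    obtain ⟨T₂, hT₂⟩ := CX_dvd_of_atZero T hT0
    constructor
    · exact ⟨S₂, by rw [hS, hS₂, pow_succ, map_mul]; ring⟩
    · exact ⟨T₂, by rw [hT, hT₂, pow_succ, map_mul]; ring⟩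
end

section
/- Let R be a commutative ring, let Q ∈ R[y], let A = Σ_{0≤j≤δ} a_j y^j ∈ R[y] be monic of degree δ (so a_δ = 1), and let f, r ∈ R. Define Ā = Σ_{0≤j≤δ} r^{δ−j} a_j y^j and Â = Ā(y − f). Then Â is monic of degree δ, Â(f + r·y) = r^δ · A(y), and the remainder of Q(f + r·y) upon division by A equals R̂(f + r·y), where R̂ is the remainder of Q upon division by Â. -/
open Polynomial PowerSeries

/-- shifted remainders. With `A` monic of degree `δ`,
`Ā = Σ_j r^{δ-j} a_j y^j` and `Â = Ā(y - f)`, the polynomial `Â` is monic of degree `δ`,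
`Â(f + r·y) = r^δ·A`, and `Q(f + r·y) rem A = (Q rem Â)(f + r·y)`. -/
theorem shifted_remainder {R : Type*} [CommRing R]
    (Q A : Polynomial R) (hA : A.Monic) (δ : ℕ) (hδ : A.natDegree = δ)
    (f r : R) (Abar Ahat : Polynomial R)
    (hAbar : Abar = ∑ j ∈ Finset.range (δ + 1),
      Polynomial.C (r ^ (δ - j) * A.coeff j) * Polynomial.X ^ j)
    (hAhat : Ahat = Abar.comp (Polynomial.X - Polynomial.C f)) :
    Ahat.Monic ∧ Ahat.natDegree = δ ∧
    Ahat.comp (Polynomial.C f + Polynomial.C r * Polynomial.X) = Polynomial.C (r ^ δ) * A ∧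
    (Q.comp (Polynomial.C f + Polynomial.C r * Polynomial.X)) %ₘ A
      = (Q %ₘ Ahat).comp (Polynomial.C f + Polynomial.C r * Polynomial.X) := by
  -- coefficient δ of Abar is 1
  have hco : Abar.coeff δ = 1 := by
    rw [hAbar]
    rw [Polynomial.finset_sum_coeff]
    simp only [Polynomial.coeff_C_mul, Polynomial.coeff_X_pow]
    rw [Finset.sum_eq_single δ]
    · simp [Nat.sub_self, hδ ▸ hA.coeff_natDegree]
    · intro j _ hj; simp [Ne.symm hj]
    · intro h; exact absurd (Finset.self_mem_range_succ δ) h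
  have hdegbar : Abar.natDegree ≤ δ := by
    rw [hAbar]
    apply Polynomial.natDegree_sum_le_of_forall_le
    intro j hj
    refine le_trans (Polynomial.natDegree_C_mul_le _ _) ?_
    refine le_trans Polynomial.natDegree_pow_le ?_
    have := Polynomial.natDegree_X_le (R := R)
    have := Nat.lt_succ_iff.mp (Finset.mem_range.mp hj)
    calc j * Polynomial.X.natDegree ≤ j * 1 := Nat.mul_le_mul_left _ Polynomial.natDegree_X_le
      _ ≤ δ := by omega
  have hbarMonic : Abar.Monic := Polynomial.monic_of_natDegree_le_of_coeff_eq_one δ hdegbar hco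
  have hhatMonic : Ahat.Monic := hAhat ▸ hbarMonic.comp_X_sub_C f
  -- Ahat.comp (X + C f) = Abar
  have hback : Ahat.comp (Polynomial.X + Polynomial.C f) = Abar := by
    rw [hAhat, Polynomial.comp_assoc]
    simp
  -- subsingleton case
  rcases subsingleton_or_nontrivial R with hR | hR
  · have h1 : Ahat = A := Subsingleton.elim _ _
    refine ⟨hhatMonic, h1 ▸ hδ, Subsingleton.elim _ _, Subsingleton.elim _ _⟩
  -- natDegree Abar = δ
  have hbarDeg : Abar.natDegree = δ :=
    le_antisymm hdegbar (Polynomial.le_natDegree_of_ne_zero (by rw [hco]; exact one_ne_zero))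
  have hhatDeg : Ahat.natDegree = δ := by
    refine le_antisymm ?_ ?_
    · rw [hAhat]
      refine le_trans Polynomial.natDegree_comp_le ?_
      rw [Polynomial.natDegree_X_sub_C, mul_one, hbarDeg]
    · calc δ = Abar.natDegree := hbarDeg.symm
        _ = (Ahat.comp (Polynomial.X + Polynomial.C f)).natDegree := by rw [hback]
        _ ≤ Ahat.natDegree * (Polynomial.X + Polynomial.C f).natDegree :=
            Polynomial.natDegree_comp_le
        _ ≤ Ahat.natDegree := by rw [Polynomial.natDegree_X_add_C, mul_one]
  set σ : Polynomial R := Polynomial.C f + Polynomial.C r * Polynomial.X with hσ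
  -- composition identity
  have hcompA : Ahat.comp σ = Polynomial.C (r ^ δ) * A := by
    rw [hAhat, Polynomial.comp_assoc]
    have h1 : (Polynomial.X - Polynomial.C f).comp σ = Polynomial.C r * Polynomial.X := by
      simp [hσ]
    rw [h1, hAbar, Polynomial.sum_comp]
    have h2 : ∀ j ∈ Finset.range (δ + 1),
        (Polynomial.C (r ^ (δ - j) * A.coeff j) * Polynomial.X ^ j).comp
          (Polynomial.C r * Polynomial.X)
        = Polynomial.C (r ^ δ) * (Polynomial.C (A.coeff j) * Polynomial.X ^ j) := by
      intro j hj
      have hjδ : j ≤ δ := Nat.lt_succ_iff.mp (Finset.mem_range.mp hj)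
      rw [Polynomial.mul_comp, Polynomial.C_comp, Polynomial.pow_comp, Polynomial.X_comp,
        mul_pow, ← Polynomial.C_pow]
      rw [show Polynomial.C (r ^ (δ - j) * A.coeff j) * (Polynomial.C (r ^ j) * Polynomial.X ^ j)
        = Polynomial.C (r ^ (δ - j) * r ^ j * A.coeff j) * Polynomial.X ^ j by
          rw [map_mul, map_mul, map_mul]; ring]
      rw [← pow_add, Nat.sub_add_cancel hjδ, map_mul]
      ring
    rw [Finset.sum_congr rfl h2, ← Finset.mul_sum]
    congr 1
    conv_rhs => rw [Polynomial.as_sum_range' A (δ + 1) (by omega)]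
    simp only [← Polynomial.C_mul_X_pow_eq_monomial]
  refine ⟨hhatMonic, hhatDeg, hcompA, ?_⟩
  -- final: remainder identity
  set v : Polynomial R := Q %ₘ Ahat with hv
  have key : v.comp σ + A * (Polynomial.C (r ^ δ) * ((Q /ₘ Ahat).comp σ)) = Q.comp σ := by
    conv_rhs => rw [← Polynomial.modByMonic_add_div Q Ahat]
    rw [Polynomial.add_comp, Polynomial.mul_comp, hcompA]
    ring
  have hdeg : (v.comp σ).degree < A.degree := by
    by_cases hv0 : v = 0
    · rw [hv0, Polynomial.zero_comp, Polynomial.degree_zero]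
      exact bot_lt_iff_ne_bot.mpr (fun h => hA.ne_zero (Polynomial.degree_eq_bot.mp h))
    · have h1 : v.degree < Ahat.degree := Polynomial.degree_modByMonic_lt Q hhatMonic
      have h2 : v.natDegree < δ := by
        have := Polynomial.natDegree_lt_natDegree hv0 h1
        omega
      have hσdeg : σ.natDegree ≤ 1 := by
        refine le_trans (Polynomial.natDegree_add_le _ _) ?_
        simp [Polynomial.natDegree_C]
        exact le_trans (Polynomial.natDegree_C_mul_le _ _) (by simp)
      have h3 : (v.comp σ).natDegree < δ :=
        lt_of_le_of_lt (le_trans Polynomial.natDegree_comp_le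
          (Nat.mul_le_mul_left _ hσdeg) |>.trans (by omega)) h2
      calc (v.comp σ).degree ≤ ((v.comp σ).natDegree : WithBot ℕ) :=
            Polynomial.degree_le_natDegree
        _ < (δ : WithBot ℕ) := by exact_mod_cast h3
        _ = A.degree := by
            rw [Polynomial.degree_eq_natDegree hA.ne_zero, hδ]
  exact (Polynomial.div_modByMonic_unique (Polynomial.C (r ^ δ) * ((Q /ₘ Ahat).comp σ))
    (v.comp σ) hA ⟨key, hdeg⟩).2
end

section
/- Let Q ∈ K⟦x⟧[y] with Q|x=0 ≠ 0, and write Q = A·B with A monic and B|x=0 a nonzero constant of K. Then for every f ∈ K[x] and t ∈ ℕ, the polynomials Q(f + x^t y) and A(f + x^t y) have the same x-valuation s, and Q(f + x^t y)/x^s and A(f + x^t y)/x^s differ by multiplication by a polynomial whose image under x = 0 is a nonzero constant; consequently, for f nonzero and t ≥ 1, the root multiplicity of (f,t) in Q equals the root multiplicity of (f,t) in A. -/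
open Polynomial PowerSeries

section Aux

variable {K : Type*} [Field K]

lemma extract (P : Polynomial (PowerSeries K)) (hP : P ≠ 0) :
    ∃ (s : ℕ) (Ps : Polynomial (PowerSeries K)),
      P = Polynomial.C ((PowerSeries.X : PowerSeries K) ^ s) * Ps ∧ atZero Ps ≠ 0 := by
  have hex : ∃ s : ℕ, ∃ i, ¬ (PowerSeries.X : PowerSeries K) ^ (s + 1) ∣ P.coeff i := by
    obtain ⟨i, hi⟩ : ∃ i, P.coeff i ≠ 0 := by
      by_contra h
      push_neg at h
      exact hP (Polynomial.ext h)
    obtain ⟨n, hn⟩ : ∃ n, (PowerSeries.coeff n) (P.coeff i) ≠ 0 := by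
      by_contra h
      push_neg at h
      exact hi (PowerSeries.ext h)
    exact ⟨n, i, fun hd => hn (PowerSeries.X_pow_dvd_iff.mp hd n (Nat.lt_succ_self n))⟩
  classical
  set s := Nat.find hex with hs_def
  obtain ⟨i, hi⟩ := Nat.find_spec hex
  have hdvd : ∀ j, (PowerSeries.X : PowerSeries K) ^ s ∣ P.coeff j := by
    intro j
    rcases Nat.eq_zero_or_pos s with h0 | h0
    · simp [h0]
    · have := Nat.find_min hex (show s - 1 < s from Nat.sub_lt h0 one_pos)
      push_neg at this
      have h2 := this j
      rwa [Nat.sub_add_cancel h0] at h2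
  obtain ⟨Ps, hPs⟩ := (Polynomial.C_dvd_iff_dvd_coeff _ P).mpr hdvd
  refine ⟨s, Ps, hPs, ?_⟩
  have hcoeff : P.coeff i = (PowerSeries.X : PowerSeries K) ^ s * Ps.coeff i := by
    rw [hPs, Polynomial.coeff_C_mul]
  have hX : ¬ (PowerSeries.X : PowerSeries K) ∣ Ps.coeff i := by
    intro ⟨g, hg⟩
    exact hi ⟨g, by rw [hcoeff, hg]; ring⟩
  intro h
  apply hX
  rw [PowerSeries.X_dvd_iff]
  have : (atZero Ps).coeff i = 0 := by rw [h]; simp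
  simpa [atZero, Polynomial.coeff_map] using this

lemma extract_le {s s' : ℕ} {P P' : Polynomial (PowerSeries K)}
    (h : Polynomial.C ((PowerSeries.X : PowerSeries K) ^ s) * P
       = Polynomial.C ((PowerSeries.X : PowerSeries K) ^ s') * P')
    (hP : atZero P ≠ 0) : s' ≤ s := by
  by_contra hlt
  push_neg at hlt
  have hXs : (Polynomial.C ((PowerSeries.X : PowerSeries K) ^ s) : Polynomial (PowerSeries K)) ≠ 0 := by
    simp [Polynomial.C_eq_zero, pow_ne_zero, PowerSeries.X_ne_zero]
  have key : P = Polynomial.C ((PowerSeries.X : PowerSeries K) ^ (s' - s)) * P' := by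
    apply mul_left_cancel₀ hXs
    rw [h, ← mul_assoc, ← Polynomial.C_mul, ← pow_add,
      Nat.add_sub_cancel' (le_of_lt hlt)]
  apply hP
  have : atZero P = atZero (Polynomial.C ((PowerSeries.X : PowerSeries K) ^ (s' - s))) * atZero P' := by
    rw [key]; simp [atZero, Polynomial.map_mul]
  rw [this]
  have hz : (PowerSeries.constantCoeff : PowerSeries K →+* K) ((PowerSeries.X : PowerSeries K) ^ (s' - s)) = 0 := by
    rw [map_pow, PowerSeries.constantCoeff_X, zero_pow (Nat.sub_ne_zero_of_lt hlt)]
  simp [atZero, hz]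
  exact Or.inl (Nat.sub_ne_zero_of_lt hlt)

lemma extract_unique {s s' : ℕ} {P P' : Polynomial (PowerSeries K)}
    (h : Polynomial.C ((PowerSeries.X : PowerSeries K) ^ s) * P
       = Polynomial.C ((PowerSeries.X : PowerSeries K) ^ s') * P')
    (hP : atZero P ≠ 0) (hP' : atZero P' ≠ 0) : s = s' ∧ P = P' := by
  have h1 := extract_le h hP
  have h2 := extract_le h.symm hP'
  have hss : s = s' := le_antisymm h2 h1
  subst hss
  refine ⟨rfl, mul_left_cancel₀ ?_ h⟩
  simp [Polynomial.C_eq_zero, pow_ne_zero, PowerSeries.X_ne_zero]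

lemma shift_mul (A B : Polynomial (PowerSeries K)) (f : PowerSeries K) (t : ℕ) :
    shift (A * B) f t = shift A f t * shift B f t := by
  simp [shift, Polynomial.mul_comp]

lemma atZero_shift_const {B : Polynomial (PowerSeries K)} {c : K}
    (hB : atZero B = Polynomial.C c) (f : PowerSeries K) (t : ℕ) :
    atZero (shift B f t) = Polynomial.C c := by
  unfold shift atZero
  rw [Polynomial.map_comp]
  rw [show B.map (PowerSeries.constantCoeff : PowerSeries K →+* K) = Polynomial.C c from hB]
  simp

lemma shift_ne_zero {A : Polynomial (PowerSeries K)} (hA : A ≠ 0) (f : PowerSeries K)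
    (t : ℕ) : shift A f t ≠ 0 := by
  unfold shift
  intro h
  rw [Polynomial.comp_eq_zero_iff] at h
  rcases h with h | ⟨-, hC⟩
  · exact hA h
  · have h1 : (Polynomial.C f + Polynomial.C ((PowerSeries.X : PowerSeries K) ^ t) * Polynomial.X).coeff 1
        = (Polynomial.C ((Polynomial.C f + Polynomial.C ((PowerSeries.X : PowerSeries K) ^ t) * Polynomial.X).coeff 0)).coeff 1 := by
      rw [← hC]
    simp only [Polynomial.coeff_add, Polynomial.coeff_C, Polynomial.coeff_C_mul,
      Polynomial.coeff_X_one, mul_one] at h1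
    norm_num at h1

lemma key_lemma {Q A B : Polynomial (PowerSeries K)}
    (hQ : Q = A * B) (hA : A.Monic)
    (hB : ∃ c : K, c ≠ 0 ∧ atZero B = Polynomial.C c)
    (f : PowerSeries K) (t : ℕ) :
    ∃ (s : ℕ) (Qs As U : Polynomial (PowerSeries K)),
      shift Q f t = Polynomial.C ((PowerSeries.X : PowerSeries K) ^ s) * Qs ∧ atZero Qs ≠ 0 ∧
      shift A f t = Polynomial.C ((PowerSeries.X : PowerSeries K) ^ s) * As ∧ atZero As ≠ 0 ∧
      Qs = As * U ∧ ∃ c : K, c ≠ 0 ∧ atZero U = Polynomial.C c := by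
  obtain ⟨c, hc, hBc⟩ := hB
  obtain ⟨s, As, hAs, hAs0⟩ := extract (shift A f t) (shift_ne_zero hA.ne_zero f t)
  have hU : atZero (shift B f t) = Polynomial.C c := atZero_shift_const hBc f t
  refine ⟨s, As * shift B f t, As, shift B f t, ?_, ?_, hAs, hAs0, rfl, c, hc, hU⟩
  · rw [hQ, shift_mul, hAs, mul_assoc]
  · rw [atZero, Polynomial.map_mul, ← atZero, ← atZero, hU]
    exact mul_ne_zero hAs0 (by simpa [Polynomial.C_eq_zero] using hc)

lemma rootMult_eq {R As U : Polynomial (PowerSeries K)} {c c' : K}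
    (hR : R = As * U) (hAs0 : atZero As ≠ 0) (hc' : c' ≠ 0)
    (hU : atZero U = Polynomial.C c') :
    (atZero R).rootMultiplicity c = (atZero As).rootMultiplicity c := by
  have h1 : atZero R = atZero As * Polynomial.C c' := by
    rw [hR, atZero, Polynomial.map_mul, ← atZero, ← atZero, hU]
  rw [h1, Polynomial.rootMultiplicity_mul
    (mul_ne_zero hAs0 (by simpa [Polynomial.C_eq_zero] using hc')),
    Polynomial.rootMultiplicity_C, add_zero]

end Aux

/-- with `Q = A·B` as usual, for every `f ∈ K[x]` and `t ∈ ℕ` the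
polynomials `Q(f + x^t y)` and `A(f + x^t y)` have the same `x`-valuation `s`, their
quotients by `x^s` differ by a factor whose image at `x = 0` is a nonzero constant,
and for nonzero `f` and `t ≥ 1` the root multiplicities of `(f,t)` in `Q` and `A`
coincide. -/
theorem shift_valuation_and_multiplicity_affine_factor {K : Type*} [Field K]
    (Q A B : Polynomial (PowerSeries K)) (h0 : atZero Q ≠ 0)
    (hQ : Q = A * B) (hA : A.Monic)
    (hB : ∃ c : K, c ≠ 0 ∧ atZero B = Polynomial.C c)
    (f : Polynomial K) (t : ℕ) :
    (∃ (s : ℕ) (Qs As U : Polynomial (PowerSeries K)),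
      shift Q ((f : Polynomial K) : PowerSeries K) t
        = Polynomial.C ((PowerSeries.X : PowerSeries K) ^ s) * Qs ∧ atZero Qs ≠ 0 ∧
      shift A ((f : Polynomial K) : PowerSeries K) t
        = Polynomial.C ((PowerSeries.X : PowerSeries K) ^ s) * As ∧ atZero As ≠ 0 ∧
      Qs = As * U ∧ ∃ c : K, c ≠ 0 ∧ atZero U = Polynomial.C c) ∧
    (f ≠ 0 → 1 ≤ t → ∀ m : ℕ, HasRootMultiplicity Q f t m ↔ HasRootMultiplicity A f t m) := by
  refine ⟨key_lemma hQ hA hB _ t, fun _ _ m => ⟨?_, ?_⟩⟩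
  · rintro ⟨g, c, s, R, hf, hg, hsh, hR0, hm⟩
    obtain ⟨s₀, Qs, As, U, hQs, hQs0, hAs, hAs0, hQsAU, c', hc', hU⟩ :=
      key_lemma hQ hA hB ((g : Polynomial K) : PowerSeries K) (t - 1)
    obtain ⟨hss, hRQs⟩ := extract_unique (hsh.symm.trans hQs) hR0 hQs0
    refine ⟨g, c, s₀, As, hf, hg, hAs, hAs0, ?_⟩
    rw [hm, hRQs, rootMult_eq hQsAU hAs0 hc' hU]
  · rintro ⟨g, c, s, R, hf, hg, hsh, hR0, hm⟩
    obtain ⟨s₀, Qs, As, U, hQs, hQs0, hAs, hAs0, hQsAU, c', hc', hU⟩ :=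
      key_lemma hQ hA hB ((g : Polynomial K) : PowerSeries K) (t - 1)
    obtain ⟨hss, hRAs⟩ := extract_unique (hsh.symm.trans hAs) hR0 hAs0
    refine ⟨g, c, s₀, Qs, hf, hg, hQs, hQs0, ?_⟩
    rw [hm, hRAs, ← rootMult_eq hQsAU hAs0 hc' hU]
end

section
/- Let f_1, …, f_n ∈ K⟦x⟧ be such that f_i − f_j is a unit of K⟦x⟧ for all i ≠ j, and let Q = (y − f_1)·…·(y − f_n) ∈ K⟦x⟧[y]. Then for every d ∈ ℤ_{>0}, roots(Q, d) = ∪_{1≤i≤n} (f_i + x^d K⟦x⟧); that is, the roots of Q to precision d are exactly the power series congruent to some f_i modulo x^d. -/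
open Polynomial PowerSeries

/-- if `Q = (y - f_1)⋯(y - f_n)` with `f_i - f_j` a unit for `i ≠ j`,
then for every `d > 0`, `roots(Q, d) = ∪_i (f_i + x^d K⟦x⟧)`. -/
theorem roots_of_split_polynomial {K : Type*} [Field K]
    (n : ℕ) (f : Fin n → PowerSeries K)
    (hunit : ∀ i j, i ≠ j → IsUnit (f i - f j))
    (Q : Polynomial (PowerSeries K))
    (hQ : Q = ∏ i, (Polynomial.X - Polynomial.C (f i)))
    (d : ℕ) (hd : 0 < d) :
    seriesRoots Q (d : ℤ) =
      ⋃ i, {g | ∃ h : PowerSeries K, g = f i + (PowerSeries.X : PowerSeries K) ^ d * h} := by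
  subst hQ
  have hdN : ((d : ℤ)).toNat = d := Int.toNat_natCast d
  ext g
  simp only [seriesRoots, Set.mem_setOf_eq, Set.mem_iUnion, hdN, Polynomial.eval_prod,
    Polynomial.eval_sub, Polynomial.eval_X, Polynomial.eval_C]
  constructor
  · intro h
    have hdvd : (PowerSeries.X : PowerSeries K) ^ d ∣ ∏ i, (g - f i) :=
      h (by exact_mod_cast hd)
    have hX : (PowerSeries.X : PowerSeries K) ∣ ∏ i, (g - f i) :=
      dvd_trans (dvd_pow_self _ hd.ne') hdvd
    obtain ⟨i, -, hi⟩ := PowerSeries.X_prime.exists_mem_finset_dvd hX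
    have hcc : PowerSeries.constantCoeff (g - f i) = 0 := PowerSeries.X_dvd_iff.mp hi
    have hu : IsUnit (∏ j ∈ Finset.univ.erase i, (g - f j)) := by
      refine Finset.prod_induction _ IsUnit (fun a b ha hb => ha.mul hb) isUnit_one ?_
      intro j hj
      rw [PowerSeries.isUnit_iff_constantCoeff]
      have hne : PowerSeries.constantCoeff (f i - f j) ≠ 0 := by
        intro h0
        have := (hunit i j fun h => (Finset.mem_erase.mp hj).1 h.symm)
        rw [PowerSeries.isUnit_iff_constantCoeff, h0] at this
        exact this.ne_zero rfl
      have : g - f j = (g - f i) + (f i - f j) := by ring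
      rw [this, map_add, hcc, zero_add]
      exact (isUnit_iff_ne_zero).mpr hne
    rw [← Finset.mul_prod_erase _ _ (Finset.mem_univ i)] at hdvd
    have : (PowerSeries.X : PowerSeries K) ^ d ∣ g - f i :=
      (IsUnit.dvd_mul_right hu).mp hdvd
    obtain ⟨h', hh⟩ := this
    exact ⟨i, h', by linear_combination hh⟩
  · rintro ⟨i, h, rfl⟩ -
    refine dvd_trans ⟨h, ?_⟩ (Finset.dvd_prod_of_mem _ (Finset.mem_univ i))
    ring
end
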